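/- Two lattice points on the boundary of a reflexive polytope either lie on a common proper face of the polytope, or their sum is again a lattice point of the polytope. -/
import Mathlib


/-- Cast an integer vector to a real vector. -/
def toR {n : ℕ} (w : Fin n → ℤ) : Fin n → ℝ := fun i => (w i : ℝ)

/-- Two lattice points on the boundary of a reflexive polytope either
lie on a common proper face of the polytope (equivalently, a common facet, i.e. some
integral facet normal `m` is tight on both), or their sum is again a lattice point of
the polytope.  The reflexive polytope `P` is encoded by its finite set `M` of integral
facet normals, each facet lying on the hyperplane `⟨m, x⟩ = -1`; `P` is bounded and
contains the origin in its interior. -/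
theorem stmt_0 {n : ℕ} (M : Finset (Fin n → ℤ)) (P : Set (Fin n → ℝ))
    (hP : P = {x | ∀ m ∈ M, (-1 : ℝ) ≤ ∑ i, (m i : ℝ) * x i})
    (hbdd : Bornology.IsBounded P)
    (h0 : (0 : Fin n → ℝ) ∈ interior P)
    (u₁ u₂ : Fin n → ℤ)
    (hu₁bd : toR u₁ ∈ frontier P) (hu₂bd : toR u₂ ∈ frontier P) :
    (∃ m ∈ M, (∑ i, (m i : ℝ) * (u₁ i : ℝ)) = -1 ∧ (∑ i, (m i : ℝ) * (u₂ i : ℝ)) = -1)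
      ∨ toR (u₁ + u₂) ∈ P := by
  by_cases hL : ∃ m ∈ M, (∑ i, (m i : ℝ) * (u₁ i : ℝ)) = -1 ∧
      (∑ i, (m i : ℝ) * (u₂ i : ℝ)) = -1
  · exact Or.inl hL
  · right
    push_neg at hL
    have hclosed : IsClosed P := by
      rw [hP]
      have : {x : Fin n → ℝ | ∀ m ∈ M, (-1 : ℝ) ≤ ∑ i, (m i : ℝ) * x i}
          = ⋂ m ∈ M, {x : Fin n → ℝ | (-1 : ℝ) ≤ ∑ i, (m i : ℝ) * x i} := by
        ext x; simp
      rw [this]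
      exact isClosed_biInter fun m _ =>
        isClosed_le continuous_const (by continuity)
    have h1 : toR u₁ ∈ P := hclosed.closure_eq ▸ frontier_subset_closure hu₁bd
    have h2 : toR u₂ ∈ P := hclosed.closure_eq ▸ frontier_subset_closure hu₂bd
    rw [hP] at h1 h2 ⊢
    intro m hm
    have e1 : (∑ i, (m i : ℝ) * toR u₁ i) = ((∑ i, m i * u₁ i : ℤ) : ℝ) := by
      push_cast [toR]; rfl
    have e2 : (∑ i, (m i : ℝ) * toR u₂ i) = ((∑ i, m i * u₂ i : ℤ) : ℝ) := by
      push_cast [toR]; rfl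
    have e3 : (∑ i, (m i : ℝ) * toR (u₁ + u₂) i)
        = ((∑ i, m i * u₁ i : ℤ) : ℝ) + ((∑ i, m i * u₂ i : ℤ) : ℝ) := by
      push_cast [toR]
      rw [← Finset.sum_add_distrib]
      exact Finset.sum_congr rfl fun i _ => by simp [Pi.add_apply]; ring
    have ha : (-1 : ℤ) ≤ ∑ i, m i * u₁ i := by
      have := h1 m hm; rw [e1] at this; exact_mod_cast this
    have hb : (-1 : ℤ) ≤ ∑ i, m i * u₂ i := by
      have := h2 m hm; rw [e2] at this; exact_mod_cast this
    have hab := hL m hm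
    rw [show (∑ i, (m i : ℝ) * (u₁ i : ℝ)) = ∑ i, (m i : ℝ) * toR u₁ i from rfl, e1,
        show (∑ i, (m i : ℝ) * (u₂ i : ℝ)) = ∑ i, (m i : ℝ) * toR u₂ i from rfl, e2] at hab
    have hab' : ¬((∑ i, m i * u₁ i : ℤ) = -1 ∧ (∑ i, m i * u₂ i : ℤ) = -1) := by
      intro ⟨x, y⟩
      exact hab (by exact_mod_cast x) (by exact_mod_cast y)
    rw [e3]
    have : (-1 : ℤ) ≤ (∑ i, m i * u₁ i) + (∑ i, m i * u₂ i) := by omega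
    exact_mod_cast this
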